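/- Let c ∈ ℝ. For all natural numbers q ≤ m and α ≤ 2m+1, applying the operator c^{2q} ∂_x ∂_y^α Δ^q to the tensor-product Taylor polynomial p and evaluating at the center gives c^{2q} ∂_x ∂_y^α Δ^q p(x_i, y_j) = c^{2q} Σ_{k} C(q,k) · (2(q−k)+1)!/Δx^{2(q−k)+1} · (2k+α)!/Δy^{2k+α} · c_{2(q−k)+1, 2k+α}, where the sum runs over 0 ≤ k ≤ q with 2k+α ≤ 2m+1. -/

import Mathlib

open Finset

/-- Partial derivative in the first (x) variable. -/
noncomputable def pd1 (f : ℝ × ℝ → ℝ) : ℝ × ℝ → ℝ :=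
  fun p => deriv (fun x => f (x, p.2)) p.1

/-- Partial derivative in the second (y) variable. -/
noncomputable def pd2 (f : ℝ × ℝ → ℝ) : ℝ × ℝ → ℝ :=
  fun p => deriv (fun y => f (p.1, y)) p.2

/-- The Laplacian Δ = ∂_x² + ∂_y². -/
noncomputable def lapl2 (f : ℝ × ℝ → ℝ) : ℝ × ℝ → ℝ :=
  fun p => pd1 (pd1 f) p + pd2 (pd2 f) p

/-- The tensor-product Taylor polynomial
p(x,y) = Σ_{l₁=0}^{2m+1} Σ_{l₂=0}^{2m+1} c_{l₁,l₂} ((x−xᵢ)/Δx)^{l₁} ((y−yⱼ)/Δy)^{l₂}. -/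
noncomputable def taylorPoly (m : ℕ) (xi yj dx dy : ℝ) (co : ℕ → ℕ → ℝ) : ℝ × ℝ → ℝ :=
  fun p => ∑ l₁ ∈ Finset.range (2 * m + 2), ∑ l₂ ∈ Finset.range (2 * m + 2),
    co l₁ l₂ * ((p.1 - xi) / dx) ^ l₁ * ((p.2 - yj) / dy) ^ l₂

namespace NHaux

/-- polynomial with coefficient array `b`, degrees `< n+1` in each variable. -/
noncomputable def tpS (xi yj dx dy : ℝ) (n : ℕ) (b : ℕ → ℕ → ℝ) : ℝ × ℝ → ℝ :=
  fun p => ∑ l₁ ∈ range (n + 1), ∑ l₂ ∈ range (n + 1),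
    b l₁ l₂ * ((p.1 - xi) / dx) ^ l₁ * ((p.2 - yj) / dy) ^ l₂

/-- coefficient action of ∂ₓ -/
noncomputable def Dxf (dx : ℝ) (b : ℕ → ℕ → ℝ) : ℕ → ℕ → ℝ :=
  fun l₁ l₂ => ((l₁ : ℝ) + 1) / dx * b (l₁ + 1) l₂

/-- coefficient action of ∂_y -/
noncomputable def Dyf (dy : ℝ) (b : ℕ → ℕ → ℝ) : ℕ → ℕ → ℝ :=
  fun l₁ l₂ => ((l₂ : ℝ) + 1) / dy * b l₁ (l₂ + 1)

def Supp (n : ℕ) (b : ℕ → ℕ → ℝ) : Prop :=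
  ∀ l₁ l₂, n + 1 ≤ l₁ ∨ n + 1 ≤ l₂ → b l₁ l₂ = 0

lemma supp_Dxf {n : ℕ} {b : ℕ → ℕ → ℝ} (dx : ℝ) (hb : Supp n b) : Supp n (Dxf dx b) := by
  intro l₁ l₂ h
  have : b (l₁ + 1) l₂ = 0 := hb _ _ (by omega)
  simp [Dxf, this]

lemma supp_Dyf {n : ℕ} {b : ℕ → ℕ → ℝ} (dy : ℝ) (hb : Supp n b) : Supp n (Dyf dy b) := by
  intro l₁ l₂ h
  have : b l₁ (l₂ + 1) = 0 := hb _ _ (by omega)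
  simp [Dyf, this]

/-- ∂ₓ acts on coefficients. -/
lemma pd1_tpS (xi yj dx dy : ℝ) (n : ℕ) (b : ℕ → ℕ → ℝ) (hb : Supp n b) :
    pd1 (tpS xi yj dx dy n b) = tpS xi yj dx dy n (Dxf dx b) := by
  funext p
  have hsum : HasDerivAt (fun x => ∑ l₁ ∈ range (n + 1), ∑ l₂ ∈ range (n + 1),
      b l₁ l₂ * ((x - xi) / dx) ^ l₁ * ((p.2 - yj) / dy) ^ l₂)
      (∑ l₁ ∈ range (n + 1), ∑ l₂ ∈ range (n + 1),
        b l₁ l₂ * ((l₁ : ℝ) * ((p.1 - xi) / dx) ^ (l₁ - 1) * (1 / dx)) *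
          ((p.2 - yj) / dy) ^ l₂) p.1 := by
    apply HasDerivAt.fun_sum
    intro l₁ _
    apply HasDerivAt.fun_sum
    intro l₂ _
    exact ((((hasDerivAt_id p.1).sub_const xi).div_const dx).pow l₁).const_mul
      (b l₁ l₂) |>.mul_const _
  show deriv (fun x => tpS xi yj dx dy n b (x, p.2)) p.1 = _
  simp only [tpS]
  rw [hsum.deriv]
  calc
    (∑ l₁ ∈ range (n + 1), ∑ l₂ ∈ range (n + 1),
        b l₁ l₂ * ((l₁ : ℝ) * ((p.1 - xi) / dx) ^ (l₁ - 1) * (1 / dx)) *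
          ((p.2 - yj) / dy) ^ l₂)
      = ∑ l₁ ∈ range n, ∑ l₂ ∈ range (n + 1),
        b (l₁ + 1) l₂ * (((l₁ + 1 : ℕ) : ℝ) * ((p.1 - xi) / dx) ^ (l₁ + 1 - 1) * (1 / dx)) *
          ((p.2 - yj) / dy) ^ l₂ := by
        rw [Finset.sum_range_succ' _ n]; simp
    _ = ∑ l₁ ∈ range n, ∑ l₂ ∈ range (n + 1),
        Dxf dx b l₁ l₂ * ((p.1 - xi) / dx) ^ l₁ * ((p.2 - yj) / dy) ^ l₂ := by
        refine Finset.sum_congr rfl fun l₁ _ => Finset.sum_congr rfl fun l₂ _ => ?_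
        simp only [Dxf, Nat.add_sub_cancel]
        push_cast
        ring
    _ = ∑ l₁ ∈ range (n + 1), ∑ l₂ ∈ range (n + 1),
        Dxf dx b l₁ l₂ * ((p.1 - xi) / dx) ^ l₁ * ((p.2 - yj) / dy) ^ l₂ := by
        rw [Finset.sum_range_succ _ n]
        have hn : ∑ l₂ ∈ range (n + 1),
            Dxf dx b n l₂ * ((p.1 - xi) / dx) ^ n * ((p.2 - yj) / dy) ^ l₂ = 0 := by
          apply Finset.sum_eq_zero
          intro l₂ _
          have : b (n + 1) l₂ = 0 := hb _ _ (Or.inl le_rfl)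
          simp [Dxf, this]
        rw [hn, add_zero]

/-- ∂_y acts on coefficients. -/
lemma pd2_tpS (xi yj dx dy : ℝ) (n : ℕ) (b : ℕ → ℕ → ℝ) (hb : Supp n b) :
    pd2 (tpS xi yj dx dy n b) = tpS xi yj dx dy n (Dyf dy b) := by
  funext p
  have hsum : HasDerivAt (fun y => ∑ l₁ ∈ range (n + 1), ∑ l₂ ∈ range (n + 1),
      b l₁ l₂ * ((p.1 - xi) / dx) ^ l₁ * ((y - yj) / dy) ^ l₂)
      (∑ l₁ ∈ range (n + 1), ∑ l₂ ∈ range (n + 1),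
        b l₁ l₂ * ((p.1 - xi) / dx) ^ l₁ *
          ((l₂ : ℝ) * ((p.2 - yj) / dy) ^ (l₂ - 1) * (1 / dy))) p.2 := by
    apply HasDerivAt.fun_sum
    intro l₁ _
    apply HasDerivAt.fun_sum
    intro l₂ _
    exact ((((hasDerivAt_id p.2).sub_const yj).div_const dy).pow l₂).const_mul
      (b l₁ l₂ * ((p.1 - xi) / dx) ^ l₁)
  show deriv (fun y => tpS xi yj dx dy n b (p.1, y)) p.2 = _
  simp only [tpS]
  rw [hsum.deriv]
  apply Finset.sum_congr rfl
  intro l₁ _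
  calc
    (∑ l₂ ∈ range (n + 1), b l₁ l₂ * ((p.1 - xi) / dx) ^ l₁ *
        ((l₂ : ℝ) * ((p.2 - yj) / dy) ^ (l₂ - 1) * (1 / dy)))
      = ∑ l₂ ∈ range n, b l₁ (l₂ + 1) * ((p.1 - xi) / dx) ^ l₁ *
          (((l₂ + 1 : ℕ) : ℝ) * ((p.2 - yj) / dy) ^ (l₂ + 1 - 1) * (1 / dy)) := by
        rw [Finset.sum_range_succ' _ n]; simp
    _ = ∑ l₂ ∈ range n,
        Dyf dy b l₁ l₂ * ((p.1 - xi) / dx) ^ l₁ * ((p.2 - yj) / dy) ^ l₂ := by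
        refine Finset.sum_congr rfl fun l₂ _ => ?_
        simp only [Dyf, Nat.add_sub_cancel]
        push_cast
        ring
    _ = ∑ l₂ ∈ range (n + 1),
        Dyf dy b l₁ l₂ * ((p.1 - xi) / dx) ^ l₁ * ((p.2 - yj) / dy) ^ l₂ := by
        rw [Finset.sum_range_succ _ n]
        have hn : Dyf dy b l₁ n * ((p.1 - xi) / dx) ^ l₁ * ((p.2 - yj) / dy) ^ n = 0 := by
          have : b l₁ (n + 1) = 0 := hb _ _ (Or.inr le_rfl)
          simp [Dyf, this]
        rw [hn, add_zero]

/-- ∂ₓ as a linear endomorphism of coefficient arrays. -/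
noncomputable def DxL (dx : ℝ) : Module.End ℝ (ℕ → ℕ → ℝ) where
  toFun := Dxf dx
  map_add' a b := by funext l₁ l₂; simp [Dxf]; ring
  map_smul' c a := by funext l₁ l₂; simp [Dxf]; ring

noncomputable def DyL (dy : ℝ) : Module.End ℝ (ℕ → ℕ → ℝ) where
  toFun := Dyf dy
  map_add' a b := by funext l₁ l₂; simp [Dyf]; ring
  map_smul' c a := by funext l₁ l₂; simp [Dyf]; ring

@[simp] lemma DxL_apply (dx : ℝ) (b : ℕ → ℕ → ℝ) : DxL dx b = Dxf dx b := rfl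
@[simp] lemma DyL_apply (dy : ℝ) (b : ℕ → ℕ → ℝ) : DyL dy b = Dyf dy b := rfl

lemma comm_DxL_DyL (dx dy : ℝ) : Commute (DxL dx) (DyL dy) := by
  apply LinearMap.ext
  intro b
  funext l₁ l₂
  simp [Module.End.mul_apply, Dxf, Dyf]
  ring

lemma supp_DxL_pow {n : ℕ} (dx : ℝ) (k : ℕ) {b : ℕ → ℕ → ℝ} (hb : Supp n b) :
    Supp n ((DxL dx ^ k) b) := by
  induction k with
  | zero => simpa using hb
  | succ k ih =>
      rw [pow_succ']
      simpa [Module.End.mul_apply] using supp_Dxf dx ih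

lemma supp_DyL_pow {n : ℕ} (dy : ℝ) (k : ℕ) {b : ℕ → ℕ → ℝ} (hb : Supp n b) :
    Supp n ((DyL dy ^ k) b) := by
  induction k with
  | zero => simpa using hb
  | succ k ih =>
      rw [pow_succ']
      simpa [Module.End.mul_apply] using supp_Dyf dy ih

lemma supp_lap {n : ℕ} (dx dy : ℝ) (q : ℕ) {b : ℕ → ℕ → ℝ} (hb : Supp n b) :
    Supp n (((DyL dy ^ 2 + DxL dx ^ 2) ^ q) b) := by
  induction q with
  | zero => simpa using hb
  | succ q ih =>
      rw [pow_succ']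
      intro l₁ l₂ h
      have h1 := supp_DyL_pow dy 2 ih l₁ l₂ h
      have h2 := supp_DxL_pow dx 2 ih l₁ l₂ h
      show ((DyL dy ^ 2 + DxL dx ^ 2) * (DyL dy ^ 2 + DxL dx ^ 2) ^ q) b l₁ l₂ = 0
      rw [Module.End.mul_apply, LinearMap.add_apply]
      simp only [Pi.add_apply]
      rw [h1, h2, add_zero]

lemma lapl2_iter (xi yj dx dy : ℝ) (n : ℕ) (q : ℕ) (b : ℕ → ℕ → ℝ) (hb : Supp n b) :
    lapl2^[q] (tpS xi yj dx dy n b) =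
      tpS xi yj dx dy n (((DyL dy ^ 2 + DxL dx ^ 2) ^ q) b) := by
  induction q with
  | zero => simp
  | succ q ih =>
      rw [Function.iterate_succ_apply', ih]
      have hs : Supp n (((DyL dy ^ 2 + DxL dx ^ 2) ^ q) b) := supp_lap dx dy q hb
      set cc := ((DyL dy ^ 2 + DxL dx ^ 2) ^ q) b with hcc
      have hco : ((DyL dy ^ 2 + DxL dx ^ 2) ^ (q + 1)) b =
          fun l₁ l₂ => Dxf dx (Dxf dx cc) l₁ l₂ + Dyf dy (Dyf dy cc) l₁ l₂ := by
        rw [pow_succ']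
        funext l₁ l₂
        simp only [Module.End.mul_apply, LinearMap.add_apply, Pi.add_apply, sq,
          DxL_apply, DyL_apply, ← hcc]
        exact add_comm _ _
      rw [hco]
      funext p
      show pd1 (pd1 _) p + pd2 (pd2 _) p = _
      rw [pd1_tpS _ _ _ _ _ _ hs, pd1_tpS _ _ _ _ _ _ (supp_Dxf dx hs),
          pd2_tpS _ _ _ _ _ _ hs, pd2_tpS _ _ _ _ _ _ (supp_Dyf dy hs)]
      simp only [tpS, add_mul, Finset.sum_add_distrib, Pi.add_apply]

lemma pd2_iter (xi yj dx dy : ℝ) (n : ℕ) (α : ℕ) (b : ℕ → ℕ → ℝ) (hb : Supp n b) :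
    pd2^[α] (tpS xi yj dx dy n b) = tpS xi yj dx dy n ((DyL dy ^ α) b) := by
  induction α with
  | zero => simp
  | succ α ih =>
      rw [Function.iterate_succ_apply', ih,
        pd2_tpS _ _ _ _ _ _ (supp_DyL_pow dy α hb), pow_succ']
      simp [Module.End.mul_apply]

lemma tpS_center (xi yj dx dy : ℝ) (n : ℕ) (b : ℕ → ℕ → ℝ) :
    tpS xi yj dx dy n b (xi, yj) = b 0 0 := by
  simp only [tpS, sub_self, zero_div]
  rw [Finset.sum_eq_single_of_mem 0 (by simp)]
  · rw [Finset.sum_eq_single_of_mem 0 (by simp)]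
    · simp
    · intro l₂ _ h; simp [zero_pow h]
  · intro l₁ _ h
    apply Finset.sum_eq_zero
    intro l₂ _
    simp [zero_pow h]

lemma dx_pow_apply (dx : ℝ) (k : ℕ) (b : ℕ → ℕ → ℝ) (l₁ l₂ : ℕ) :
    ((DxL dx ^ k) b) l₁ l₂ =
      (∏ i ∈ range k, ((l₁ : ℝ) + 1 + i)) / dx ^ k * b (l₁ + k) l₂ := by
  induction k generalizing l₁ with
  | zero => simp
  | succ k ih =>
      rw [pow_succ']
      simp only [Module.End.mul_apply, DxL_apply, Dxf]
      rw [ih (l₁ + 1)]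
      rw [Finset.prod_range_succ' (fun i => (l₁ : ℝ) + 1 + i) k]
      have hc : ∀ i : ℕ, ((l₁ : ℝ) + 1 + (↑(i + 1) : ℝ)) = ((l₁ + 1 : ℕ) : ℝ) + 1 + i := by
        intro i; push_cast; ring
      rw [show (∏ i ∈ range k, ((l₁ : ℝ) + 1 + ↑(i + 1))) =
        ∏ i ∈ range k, (((l₁ + 1 : ℕ) : ℝ) + 1 + i) from Finset.prod_congr rfl fun i _ => hc i]
      have hidx : l₁ + 1 + k = l₁ + (k + 1) := by omega
      rw [hidx]
      push_cast
      rw [pow_succ]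
      field_simp
      ring

lemma dy_pow_apply (dy : ℝ) (k : ℕ) (b : ℕ → ℕ → ℝ) (l₁ l₂ : ℕ) :
    ((DyL dy ^ k) b) l₁ l₂ =
      (∏ i ∈ range k, ((l₂ : ℝ) + 1 + i)) / dy ^ k * b l₁ (l₂ + k) := by
  induction k generalizing l₂ with
  | zero => simp
  | succ k ih =>
      rw [pow_succ']
      simp only [Module.End.mul_apply, DyL_apply, Dyf]
      rw [ih (l₂ + 1)]
      rw [Finset.prod_range_succ' (fun i => (l₂ : ℝ) + 1 + i) k]
      have hc : ∀ i : ℕ, ((l₂ : ℝ) + 1 + (↑(i + 1) : ℝ)) = ((l₂ + 1 : ℕ) : ℝ) + 1 + i := by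
        intro i; push_cast; ring
      rw [show (∏ i ∈ range k, ((l₂ : ℝ) + 1 + ↑(i + 1))) =
        ∏ i ∈ range k, (((l₂ + 1 : ℕ) : ℝ) + 1 + i) from Finset.prod_congr rfl fun i _ => hc i]
      have hidx : l₂ + 1 + k = l₂ + (k + 1) := by omega
      rw [hidx]
      push_cast
      rw [pow_succ]
      field_simp
      ring

lemma prod_one_fac (k : ℕ) : (∏ i ∈ range k, ((0 : ℝ) + 1 + i)) = k.factorial := by
  induction k with
  | zero => simp
  | succ k ih =>
      rw [Finset.prod_range_succ, ih, Nat.factorial_succ]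
      push_cast
      ring

lemma prod_two_fac (k : ℕ) : (∏ i ∈ range k, ((1 : ℝ) + 1 + i)) = (k + 1).factorial := by
  induction k with
  | zero => simp
  | succ k ih =>
      rw [Finset.prod_range_succ, ih, Nat.factorial_succ (k + 1)]
      push_cast
      ring

end NHaux

open NHaux in
theorem neumann_hermite_cbc_formula
    (m : ℕ) (xi yj dx dy : ℝ) (hdx : dx ≠ 0) (hdy : dy ≠ 0) (co : ℕ → ℕ → ℝ)
    (c : ℝ) :
    ∀ q α : ℕ, q ≤ m → α ≤ 2 * m + 1 →
      c ^ (2 * q) *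
        (pd1 (pd2^[α] (lapl2^[q] (taylorPoly m xi yj dx dy co)))) (xi, yj)
      = c ^ (2 * q) *
          ∑ k ∈ (Finset.range (q + 1)).filter (fun k => 2 * k + α ≤ 2 * m + 1),
            (q.choose k : ℝ) *
              (((2 * (q - k) + 1).factorial : ℝ) / dx ^ (2 * (q - k) + 1)) *
              (((2 * k + α).factorial : ℝ) / dy ^ (2 * k + α)) *
              co (2 * (q - k) + 1) (2 * k + α) := by
  intro q α hq hα
  congr 1
  -- truncated coefficient array
  set b : ℕ → ℕ → ℝ := fun l₁ l₂ =>
    if l₁ ≤ 2 * m + 1 ∧ l₂ ≤ 2 * m + 1 then co l₁ l₂ else 0 with hbdef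
  have hb : Supp (2 * m + 1) b := by
    intro l₁ l₂ h
    simp only [hbdef]
    rw [if_neg (by omega)]
  have htp : taylorPoly m xi yj dx dy co = tpS xi yj dx dy (2 * m + 1) b := by
    funext p
    simp only [taylorPoly, tpS]
    have h2 : 2 * m + 2 = 2 * m + 1 + 1 := by omega
    rw [h2]
    apply Finset.sum_congr rfl
    intro l₁ hl₁
    apply Finset.sum_congr rfl
    intro l₂ hl₂
    simp only [Finset.mem_range] at hl₁ hl₂
    rw [hbdef]
    simp only []
    rw [if_pos ⟨by omega, by omega⟩]
  rw [htp, lapl2_iter _ _ _ _ _ _ _ hb,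
      pd2_iter _ _ _ _ _ _ _ (supp_lap dx dy q hb),
      pd1_tpS _ _ _ _ _ _ (supp_DyL_pow dy α (supp_lap dx dy q hb)),
      tpS_center]
  -- expand the binomial power of the Laplacian
  have hc : Commute (DyL dy ^ 2) (DxL dx ^ 2) :=
    ((comm_DxL_DyL dx dy).symm).pow_pow 2 2
  rw [hc.add_pow q]
  simp only [Dxf]
  simp only [LinearMap.coe_sum, Finset.sum_apply]
  rw [map_sum]
  simp only [Finset.sum_apply]
  rw [Finset.mul_sum, Finset.sum_filter]
  refine Finset.sum_congr rfl fun k hk => ?_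
  have hkq : k ≤ q := by
    have := Finset.mem_range.mp hk
    omega
  rw [← pow_mul (DyL dy) 2 k, ← pow_mul (DxL dx) 2 (q - k),
      Module.End.mul_apply, Module.End.mul_apply,
      Module.End.natCast_apply,
      ← Module.End.mul_apply (DyL dy ^ α), ← pow_add,
      show α + 2 * k = 2 * k + α from by omega,
      dy_pow_apply, dx_pow_apply]
  rw [show (0 : ℕ) + 1 + 2 * (q - k) = 2 * (q - k) + 1 from by omega,
      show (0 : ℕ) + (2 * k + α) = 2 * k + α from by omega]
  have hp1 : (∏ i ∈ range (2 * k + α), (((0 : ℕ) : ℝ) + 1 + i)) =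
      (2 * k + α).factorial := by
    rw [show (((0 : ℕ) : ℝ)) = (0 : ℝ) from by norm_num]
    exact prod_one_fac _
  have hp2 : (∏ i ∈ range (2 * (q - k)), ((((0 : ℕ) + 1 : ℕ) : ℝ) + 1 + i)) =
      (2 * (q - k) + 1).factorial := by
    rw [show ((((0 : ℕ) + 1 : ℕ) : ℝ)) = (1 : ℝ) from by norm_num]
    exact prod_two_fac _
  rw [hp1, hp2]
  simp only [Pi.smul_apply, nsmul_eq_mul]
  have h1 : 2 * (q - k) + 1 ≤ 2 * m + 1 := by omega
  by_cases hcase : 2 * k + α ≤ 2 * m + 1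
  · rw [hbdef]
    simp only []
    rw [if_pos ⟨h1, hcase⟩, if_pos hcase]
    rw [pow_succ dx (2 * (q - k))]
    push_cast
    field_simp
    ring
  · rw [hbdef]
    simp only []
    rw [if_neg (by tauto), if_neg hcase]
    simp
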